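/- Let S ⊂ B^n be a finite set of N points, let K ⊂ B^n \ {0} be compact, and fix η_1 > 0. There exists δ_1 > 0, depending only on η_1, N, and min_K ‖z‖ (explicitly δ_1 = 2^{-2N} (min_K ‖z‖)^N η_1, also requiring δ_1 ≤ (1/2) min_K ‖z‖), such that for any z_1, z_2 ∈ K with ‖z_1 − z_2‖ ≤ δ_1 and S ⊂ B(0, δ_1), the holomorphic map Φ(z) = z + (P(z)/P(z_1))(z_2 − z_1), where P(z) = ∏_{a∈S} (z − a)·(z̄_1/‖z_1‖), satisfies Φ|_S = id, Φ(z_1) = z_2, and Φ(B^n) ⊆ B(0, 1+η_1). -/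

import Mathlib

open Finset

/-- Lemma on moving one point while fixing a pole set: let `K ⊂ 𝔹^n \ {0}` be compact and
`η₁ > 0`. With `m = min_K ‖z‖` and `δ₁ = min(m/2, 2^{-2N} m^N η₁)`, for any `z₁, z₂ ∈ K`
with `‖z₁ - z₂‖ ≤ δ₁` and any set `S` of `N` points contained in `B(0, δ₁)`, the holomorphic
map `Φ(z) = z + (P(z)/P(z₁))(z₂ - z₁)`, where `P(z) = ∏_{a ∈ S} (z-a)·(z̄₁/‖z₁‖)`,
fixes `S`, sends `z₁` to `z₂`, and maps `𝔹^n` into `B(0, 1+η₁)`. -/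
theorem moving_map_exists {n N : ℕ} (η₁ : ℝ) (hη₁ : 0 < η₁)
    (K : Set (EuclideanSpace ℂ (Fin n))) (hKc : IsCompact K) (hKne : K.Nonempty)
    (hK : K ⊆ Metric.ball (0 : EuclideanSpace ℂ (Fin n)) 1 \ {0}) :
    ∃ δ₁ > 0,
      δ₁ = min (sInf (norm '' K) / 2)
        (((2 : ℝ) ^ (2 * N))⁻¹ * sInf (norm '' K) ^ N * η₁) ∧
      ∀ z₁ ∈ K, ∀ z₂ ∈ K, ‖z₁ - z₂‖ ≤ δ₁ →
        ∀ S : Finset (EuclideanSpace ℂ (Fin n)), S.card = N →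
          (∀ a ∈ S, a ∈ Metric.ball (0 : EuclideanSpace ℂ (Fin n)) δ₁) →
          ∀ P : EuclideanSpace ℂ (Fin n) → ℂ,
            (P = fun z => ∏ a ∈ S, (inner ℂ z₁ (z - a) : ℂ) / (‖z₁‖ : ℂ)) →
          ∀ Φ : EuclideanSpace ℂ (Fin n) → EuclideanSpace ℂ (Fin n),
            (Φ = fun z => z + (P z / P z₁) • (z₂ - z₁)) →
            Differentiable ℂ Φ ∧ (∀ a ∈ S, Φ a = a) ∧ Φ z₁ = z₂ ∧
              ∀ z : EuclideanSpace ℂ (Fin n), ‖z‖ < 1 → ‖Φ z‖ < 1 + η₁ := by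
  set m := sInf (norm '' K) with hm
  -- basic facts about m
  obtain ⟨x₀, hx₀K, hx₀min'⟩ := hKc.exists_isMinOn hKne continuous_norm.continuousOn
  have hx₀min : ∀ z ∈ K, ‖x₀‖ ≤ ‖z‖ := fun z hz => hx₀min' hz
  have hx₀pos : 0 < ‖x₀‖ := by
    have := hK hx₀K
    simpa [norm_pos_iff] using this.2
  have hmpos : 0 < m := by
    have : ‖x₀‖ ≤ m := le_csInf (hKne.image _) (fun y ⟨z, hz, hzy⟩ => hzy ▸ hx₀min z hz)
    linarith
  have hbdd : BddBelow (norm '' K) := ⟨0, fun y ⟨z, _, hzy⟩ => hzy ▸ norm_nonneg z⟩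
  have hmle : ∀ z ∈ K, m ≤ ‖z‖ := fun z hz => csInf_le hbdd ⟨z, hz, rfl⟩
  have hmlt1 : m < 1 := by
    have h1 : ‖x₀‖ < 1 := by simpa using (hK hx₀K).1
    have : m ≤ ‖x₀‖ := hmle x₀ hx₀K
    linarith
  set δ := min (m / 2) (((2 : ℝ) ^ (2 * N))⁻¹ * m ^ N * η₁) with hδ
  have hδpos : 0 < δ := lt_min (by linarith) (by positivity)
  refine ⟨δ, hδpos, rfl, ?_⟩
  intro z₁ hz₁ z₂ hz₂ hdist S hcard hS P hP Φ hΦ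
  have hz₁pos : 0 < ‖z₁‖ := lt_of_lt_of_le hmpos (hmle z₁ hz₁)
  have hz₁lt1 : ‖z₁‖ < 1 := by simpa using (hK hz₁).1
  have hδm : δ ≤ m / 2 := min_le_left _ _
  have hδη : δ ≤ ((2 : ℝ) ^ (2 * N))⁻¹ * m ^ N * η₁ := min_le_right _ _
  -- lower bound on each factor at z₁
  have hfac_lo : ∀ a ∈ S, m / 2 ≤ ‖(inner ℂ z₁ (z₁ - a) : ℂ) / (‖z₁‖ : ℂ)‖ := by
    intro a ha
    have haδ : ‖a‖ < δ := by simpa using hS a ha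
    have h1 : ‖(inner ℂ z₁ a : ℂ)‖ ≤ ‖z₁‖ * ‖a‖ := norm_inner_le_norm z₁ a
    have h2 : (inner ℂ z₁ (z₁ - a) : ℂ) = inner ℂ z₁ z₁ - inner ℂ z₁ a := inner_sub_right _ _ _
    have h3 : ‖(inner ℂ z₁ z₁ : ℂ)‖ = ‖z₁‖ ^ 2 := by
      rw [inner_self_eq_norm_sq_to_K]
      simp [sq_abs]
    have h4 : ‖z₁‖ ^ 2 - ‖z₁‖ * ‖a‖ ≤ ‖(inner ℂ z₁ (z₁ - a) : ℂ)‖ := by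
      calc ‖z₁‖ ^ 2 - ‖z₁‖ * ‖a‖ ≤ ‖(inner ℂ z₁ z₁ : ℂ)‖ - ‖(inner ℂ z₁ a : ℂ)‖ := by
            rw [h3]; linarith
        _ ≤ ‖(inner ℂ z₁ z₁ : ℂ) - inner ℂ z₁ a‖ := norm_sub_norm_le _ _
        _ = ‖(inner ℂ z₁ (z₁ - a) : ℂ)‖ := by rw [h2]
    rw [norm_div]
    have h5 : ‖((‖z₁‖ : ℝ) : ℂ)‖ = ‖z₁‖ := by
      simp [Complex.norm_real, abs_of_nonneg (norm_nonneg z₁)]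
    rw [h5, le_div_iff₀ hz₁pos]
    have hz₁m : m ≤ ‖z₁‖ := hmle z₁ hz₁
    nlinarith [h4]
  -- upper bound on each factor on the unit ball
  have hfac_hi : ∀ z : EuclideanSpace ℂ (Fin n), ‖z‖ < 1 → ∀ a ∈ S,
      ‖(inner ℂ z₁ (z - a) : ℂ) / (‖z₁‖ : ℂ)‖ ≤ 2 := by
    intro z hz a ha
    have haδ : ‖a‖ < δ := by simpa using hS a ha
    rw [norm_div]
    have h5 : ‖((‖z₁‖ : ℝ) : ℂ)‖ = ‖z₁‖ := by
      simp [Complex.norm_real, abs_of_nonneg (norm_nonneg z₁)]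
    rw [h5, div_le_iff₀ hz₁pos]
    have h1 : ‖(inner ℂ z₁ (z - a) : ℂ)‖ ≤ ‖z₁‖ * ‖z - a‖ := norm_inner_le_norm _ _
    have h2 : ‖z - a‖ ≤ ‖z‖ + ‖a‖ := norm_sub_le _ _
    nlinarith
  -- lower bound on |P z₁|
  have hPz₁ : (m / 2) ^ N ≤ ‖P z₁‖ := by
    rw [hP]
    simp only
    rw [norm_prod]
    calc (m / 2) ^ N = ∏ _a ∈ S, (m / 2) := by rw [Finset.prod_const, hcard]
      _ ≤ ∏ a ∈ S, ‖(inner ℂ z₁ (z₁ - a) : ℂ) / (‖z₁‖ : ℂ)‖ :=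
          Finset.prod_le_prod (fun a _ => by linarith) (fun a ha => hfac_lo a ha)
  have hPz₁pos : 0 < ‖P z₁‖ := lt_of_lt_of_le (by positivity) hPz₁
  have hPz₁ne : P z₁ ≠ 0 := fun h => by simp [h] at hPz₁pos
  -- differentiability
  have key : ∀ T : Finset (EuclideanSpace ℂ (Fin n)), Differentiable ℂ
      (fun z : EuclideanSpace ℂ (Fin n) => ∏ a ∈ T, (inner ℂ z₁ (z - a) : ℂ) / (‖z₁‖ : ℂ)) := by
    classical
    intro T
    induction T using Finset.induction_on with
    | empty => simpa using differentiable_const (1 : ℂ)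
    | @insert a T ha ih =>
      have hinner : Differentiable ℂ
          (fun z : EuclideanSpace ℂ (Fin n) => (inner ℂ z₁ (z - a) : ℂ)) := by
        have h : (fun z : EuclideanSpace ℂ (Fin n) => (inner ℂ z₁ (z - a) : ℂ)) =
            fun z => (innerSL ℂ z₁) (z - a) := rfl
        rw [h]
        exact (innerSL ℂ z₁).differentiable.comp (differentiable_id.sub_const a)
      have hfa : Differentiable ℂ
          (fun z : EuclideanSpace ℂ (Fin n) => (inner ℂ z₁ (z - a) : ℂ) / (‖z₁‖ : ℂ)) := by
        simp only [div_eq_mul_inv]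
        exact hinner.mul_const _
      simp only [Finset.prod_insert ha]
      exact hfa.mul ih
  have hPdiff : Differentiable ℂ P := by rw [hP]; exact key S
  have hΦdiff : Differentiable ℂ Φ := by
    rw [hΦ]
    simp only [div_eq_mul_inv]
    exact differentiable_id.add ((hPdiff.mul_const ((P z₁)⁻¹)).smul
      (differentiable_const (z₂ - z₁)))
  refine ⟨hΦdiff, ?_, ?_, ?_⟩
  · -- fixes S
    intro a ha
    have hPa : P a = 0 := by
      rw [hP]
      exact Finset.prod_eq_zero ha (by simp)
    simp [hΦ, hPa]
  · -- sends z₁ to z₂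
    simp [hΦ, div_self hPz₁ne]
  · -- norm bound
    intro z hz
    have hPz : ‖P z‖ ≤ 2 ^ N := by
      rw [hP]
      simp only
      rw [norm_prod]
      calc ∏ a ∈ S, ‖(inner ℂ z₁ (z - a) : ℂ) / (‖z₁‖ : ℂ)‖
          ≤ ∏ _a ∈ S, (2 : ℝ) :=
            Finset.prod_le_prod (fun a _ => norm_nonneg _) (fun a ha => hfac_hi z hz a ha)
        _ = 2 ^ N := by rw [Finset.prod_const, hcard]
    have hquot : ‖P z / P z₁‖ ≤ 2 ^ (2 * N) / m ^ N := by
      have h1 : ‖P z / P z₁‖ ≤ 2 ^ N / (m / 2) ^ N := by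
        rw [norm_div]
        exact div_le_div₀ (by positivity) hPz (by positivity) hPz₁
      calc ‖P z / P z₁‖ ≤ 2 ^ N / (m / 2) ^ N := h1
        _ = 2 ^ (2 * N) / m ^ N := by
            rw [div_pow, div_div_eq_mul_div, ← pow_add, two_mul]
    have h21 : ‖z₂ - z₁‖ ≤ ((2 : ℝ) ^ (2 * N))⁻¹ * m ^ N * η₁ := by
      rw [norm_sub_rev]; exact hdist.trans hδη
    have hstep : ‖(P z / P z₁) • (z₂ - z₁)‖ ≤ η₁ := by
      rw [norm_smul]
      calc ‖P z / P z₁‖ * ‖z₂ - z₁‖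
          ≤ (2 ^ (2 * N) / m ^ N) * (((2 : ℝ) ^ (2 * N))⁻¹ * m ^ N * η₁) :=
            mul_le_mul hquot h21 (norm_nonneg _) (by positivity)
        _ = η₁ := by field_simp
    calc ‖Φ z‖ = ‖z + (P z / P z₁) • (z₂ - z₁)‖ := by rw [hΦ]
      _ ≤ ‖z‖ + ‖(P z / P z₁) • (z₂ - z₁)‖ := norm_add_le _ _
      _ < 1 + η₁ := add_lt_add_of_lt_of_le hz hstep
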